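/- Let H be a finite abelian group of odd order having no element of order 3, let G = Z₅ × H, and let γ be a function from Z₅ × (H \ {0}) to {1, 2} satisfying: (1) γ(g) ≠ γ(−2g) for all g in its domain, and (2) γ(g) = γ(g′) whenever g + g′ ∈ Z₅ × {0}. Let ∞₁ and ∞₂ be two points not in G. Let B⁰ be the collection of 3-element subsets {g, g′, g″} of G with g + g′ + g″ = 0 that are not contained in Z₅ × {0}; let B^∞ = { {−g, 2g, ∞_{γ(g)}} : g ∈ Z₅ × (H \ {0}) }; and let B* be the triple set of a Steiner triple system of order 7 on the point set (Z₅ × {0}) ∪ {∞₁, ∞₂} such that the triple {0_G, ∞₁, ∞₂} is not in B*. Then the Steiner triple system (G ∪ {∞₁, ∞₂}, B⁰ ∪ B^∞ ∪ B*) has no parallel class, i.e., no subset of B⁰ ∪ B^∞ ∪ B* partitions the point set G ∪ {∞₁, ∞₂}. -/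

import Mathlib

lemma aux_sum_univ_zero {A : Type*} [AddCommGroup A] [Fintype A]
    (h : Odd (Fintype.card A)) : ∑ x : A, x = 0 := by
  obtain ⟨k, hk⟩ := h
  have h1 : ∑ x : A, x = ∑ x : A, -x :=
    Fintype.sum_equiv (Equiv.neg A) _ _ (fun x => (neg_neg x).symm)
  have h2 : (∑ x : A, x) + ∑ x : A, x = 0 := by
    nth_rewrite 2 [h1]
    rw [← Finset.sum_add_distrib]
    simp
  have h3 : Fintype.card A • (∑ x : A, x) = 0 := card_nsmul_eq_zero
  rw [hk] at h3
  calc ∑ x : A, x = (2 * k + 1) • (∑ x : A, x) := by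
        rw [add_nsmul, mul_nsmul, two_nsmul, h2, smul_zero, zero_add, one_nsmul]
      _ = 0 := h3

lemma aux_sum_triple {V M : Type*} [DecidableEq V] [AddCommMonoid M] (f : V → M)
    {a b c : V} (hab : a ≠ b) (hac : a ≠ c) (hbc : b ≠ c) :
    ∑ x ∈ ({a, b, c} : Finset V), f x = f a + f b + f c := by
  rw [Finset.sum_insert (by simp [hab, hac]), Finset.sum_insert (by simp [hbc]),
    Finset.sum_singleton, add_assoc]

lemma aux_third_point {V : Type*} {S : Set V} (hfin : S.Finite) (h3 : S.ncard = 3)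
    {a p : V} (ha : a ∈ S) (hp : p ∈ S) (hne : a ≠ p) :
    ∃ z, z ≠ a ∧ z ≠ p ∧ z ∈ S ∧ S = {a, p, z} := by
  have hsub : ({a, p} : Set V) ⊆ S := by
    intro x hx; rcases hx with rfl | rfl; exacts [ha, hp]
  have hd : (S \ {a, p}).ncard = 1 := by
    rw [Set.ncard_diff hsub, h3, Set.ncard_pair hne]
  obtain ⟨z, hz⟩ := Set.ncard_eq_one.mp hd
  have hzmem : z ∈ S \ ({a, p} : Set V) := hz ▸ rfl
  refine ⟨z, ?_, ?_, hzmem.1, ?_⟩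
  · rintro rfl; exact hzmem.2 (Or.inl rfl)
  · rintro rfl; exact hzmem.2 (Or.inr rfl)
  · have : S = {a, p} ∪ (S \ {a, p}) := (Set.union_diff_cancel hsub).symm
    rw [this, hz]
    ext x
    simp only [Set.mem_union, Set.mem_insert_iff, Set.mem_singleton_iff]
    tauto

lemma aux_fano {V : Type*} (W : Set V) (hWfin : W.Finite) (hW : W.ncard = 7)
    (B : Set (Set V)) (hsub : ∀ T ∈ B, T ⊆ W) (hcard : ∀ T ∈ B, T.ncard = 3)
    (hpairs : ∀ x ∈ W, ∀ y ∈ W, x ≠ y → ∃! T, T ∈ B ∧ x ∈ T ∧ y ∈ T)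
    {T₁ T₂ : Set V} (h1 : T₁ ∈ B) (h2 : T₂ ∈ B) (hd : Disjoint T₁ T₂) : False := by
  have hfin1 : T₁.Finite := hWfin.subset (hsub _ h1)
  have hfin2 : T₂.Finite := hWfin.subset (hsub _ h2)
  obtain ⟨a, ha⟩ : T₁.Nonempty := by
    rw [← Set.ncard_pos hfin1, hcard _ h1]; norm_num
  obtain ⟨d, e, f, hde, hdf, hef, hT2⟩ := Set.ncard_eq_three.mp (hcard _ h2)
  have hdT2 : d ∈ T₂ := by rw [hT2]; simp
  have heT2 : e ∈ T₂ := by rw [hT2]; simp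
  have haW : a ∈ W := hsub _ h1 ha
  have haT2 : a ∉ T₂ := fun h => Set.disjoint_left.mp hd ha h
  have key : ∀ p ∈ T₂, ∀ Tp ∈ B, a ∈ Tp → p ∈ Tp →
      ∃ z, z ∈ W \ (T₁ ∪ T₂) ∧ z ≠ a ∧ z ∈ Tp := by
    intro p hpT2 Tp hTpB haTp hpTp
    have hap : a ≠ p := fun h => haT2 (h ▸ hpT2)
    obtain ⟨z, hza, hzp, hzTp, hTp⟩ :=
      aux_third_point (hWfin.subset (hsub _ hTpB)) (hcard _ hTpB) haTp hpTp hap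
    refine ⟨z, ⟨hsub _ hTpB hzTp, ?_⟩, hza, hzTp⟩
    rintro (hz1 | hz2)
    · have hTpT1 : Tp ≠ T₁ := by
        intro h; rw [h] at hpTp; exact Set.disjoint_left.mp hd hpTp hpT2
      obtain ⟨T, -, hTu⟩ := hpairs a haW z (hsub _ hTpB hzTp) (Ne.symm hza)
      exact hTpT1 ((hTu Tp ⟨hTpB, haTp, hzTp⟩).trans (hTu T₁ ⟨h1, ha, hz1⟩).symm)
    · have hTpT2 : Tp ≠ T₂ := fun h => haT2 (h ▸ haTp)
      obtain ⟨T, -, hTu⟩ := hpairs p (hsub _ h2 hpT2) z (hsub _ hTpB hzTp) (Ne.symm hzp)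
      exact hTpT2 ((hTu Tp ⟨hTpB, hpTp, hzTp⟩).trans (hTu T₂ ⟨h2, hpT2, hz2⟩).symm)
  have hdW : d ∈ W := hsub _ h2 hdT2
  have heW : e ∈ W := hsub _ h2 heT2
  have hadne : a ≠ d := fun h => haT2 (h ▸ hdT2)
  have haene : a ≠ e := fun h => haT2 (h ▸ heT2)
  have hRcard : (W \ (T₁ ∪ T₂)).ncard = 1 := by
    have hsubU : T₁ ∪ T₂ ⊆ W := Set.union_subset (hsub _ h1) (hsub _ h2)
    have hfinU : (T₁ ∪ T₂).Finite := hfin1.union hfin2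
    rw [Set.ncard_diff hsubU hfinU, Set.ncard_union_eq hd hfin1 hfin2,
      hcard _ h1, hcard _ h2, hW]
  obtain ⟨r, hr⟩ := Set.ncard_eq_one.mp hRcard
  obtain ⟨Td, ⟨hTdB, haTd, hdTd⟩, hTdu⟩ := hpairs a haW d hdW hadne
  obtain ⟨Te, ⟨hTeB, haTe, heTe⟩, hTeu⟩ := hpairs a haW e heW haene
  obtain ⟨zd, hzdR, hzda, hzdTd⟩ := key d hdT2 Td hTdB haTd hdTd
  obtain ⟨ze, hzeR, hzea, hzeTe⟩ := key e heT2 Te hTeB haTe heTe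
  have hzz : zd = ze := by
    have h1' : zd = r := by rw [hr] at hzdR; exact hzdR
    have h2' : ze = r := by rw [hr] at hzeR; exact hzeR
    rw [h1', h2']
  have hTdTe : Td ≠ Te := by
    intro h
    rw [h] at hdTd
    have hTeT2 : Te ≠ T₂ := fun h' => haT2 (h' ▸ haTe)
    obtain ⟨T, -, hTu⟩ := hpairs d hdW e heW hde
    exact hTeT2 ((hTu Te ⟨hTeB, hdTd, heTe⟩).trans (hTu T₂ ⟨h2, hdT2, heT2⟩).symm)
  obtain ⟨T, -, hTu⟩ := hpairs a haW zd (hzdR.1) (Ne.symm hzda)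
  exact hTdTe ((hTu Td ⟨hTdB, haTd, hzdTd⟩).trans
    (hTu Te ⟨hTeB, haTe, hzz ▸ hzeTe⟩).symm)

lemma aux_fin2 : ∀ i : Fin 2, i = 0 ∨ i = 1 := by decide

/-- `B` has a parallel class: a subcollection of `B` partitioning the point set,
i.e. every point lies in exactly one of its triples. -/
def HasParallelClass {V : Type*} (B : Set (Set V)) : Prop :=
  ∃ C ⊆ B, ∀ x : V, ∃! T, T ∈ C ∧ x ∈ T

theorem stmt14 {H : Type*} [AddCommGroup H] [Fintype H]
    (hodd : Odd (Fintype.card H)) (h3 : ∀ x : H, addOrderOf x ≠ 3)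
    -- γ sends Z₅ × (H \ {0}) to the two-element set indexing ∞₁, ∞₂
    (γ : ZMod 5 × H → Fin 2)
    (hγ1 : ∀ g : ZMod 5 × H, g.2 ≠ 0 → γ g ≠ γ ((-2 : ℤ) • g))
    (hγ2 : ∀ g g' : ZMod 5 × H, g.2 ≠ 0 → g'.2 ≠ 0 → (g + g').2 = 0 → γ g = γ g')
    -- B* : the triples of a Steiner triple system of order 7 on (Z₅ × {0}) ∪ {∞₁, ∞₂}
    (Bstar : Set (Set ((ZMod 5 × H) ⊕ Fin 2)))
    (hBsub : ∀ T ∈ Bstar,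
      T ⊆ (Sum.inl '' {g : ZMod 5 × H | g.2 = 0}) ∪ Set.range Sum.inr)
    (hBcard : ∀ T ∈ Bstar, T.ncard = 3)
    (hBpairs : ∀ x ∈ (Sum.inl '' {g : ZMod 5 × H | g.2 = 0}) ∪
        Set.range (Sum.inr : Fin 2 → (ZMod 5 × H) ⊕ Fin 2),
      ∀ y ∈ (Sum.inl '' {g : ZMod 5 × H | g.2 = 0}) ∪
        Set.range (Sum.inr : Fin 2 → (ZMod 5 × H) ⊕ Fin 2),
      x ≠ y → ∃! T, T ∈ Bstar ∧ x ∈ T ∧ y ∈ T)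
    -- the triple {0_G, ∞₁, ∞₂} is not in B*
    (h0 : ({Sum.inl 0, Sum.inr 0, Sum.inr 1} :
        Set ((ZMod 5 × H) ⊕ Fin 2)) ∉ Bstar) :
    ¬ HasParallelClass
      (({T | ∃ g g' g'' : ZMod 5 × H, g ≠ g' ∧ g ≠ g'' ∧ g' ≠ g'' ∧
            g + g' + g'' = 0 ∧ ¬(g.2 = 0 ∧ g'.2 = 0 ∧ g''.2 = 0) ∧
            T = {Sum.inl g, Sum.inl g', Sum.inl g''}} :
          Set (Set ((ZMod 5 × H) ⊕ Fin 2)))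
        ∪ {T | ∃ g : ZMod 5 × H, g.2 ≠ 0 ∧
            T = {Sum.inl (-g), Sum.inl ((2 : ℤ) • g), Sum.inr (γ g)}}
        ∪ Bstar) := by
  classical
  rintro ⟨C, hCB, hu⟩
  set W : Set ((ZMod 5 × H) ⊕ Fin 2) :=
    (Sum.inl '' {g : ZMod 5 × H | g.2 = 0}) ∪ Set.range Sum.inr with hWdef
  -- no relevant element of order 3
  have hne3 : ∀ g : ZMod 5 × H, g.2 ≠ 0 → -g ≠ (2 : ℤ) • g := by
    intro g hg h
    have h30 : (3 : ℤ) • g = 0 := by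
      rw [show (3 : ℤ) = 2 + 1 by norm_num, add_zsmul, one_zsmul, ← h]
      abel
    have h2 : (3 : ℤ) • g.2 = 0 := by
      have := congrArg Prod.snd h30
      rwa [Prod.smul_snd] at this
    have h32 : (3 : ℕ) • g.2 = 0 := by
      rw [← natCast_zsmul]; exact_mod_cast h2
    have hdvd : addOrderOf g.2 ∣ 3 := addOrderOf_dvd_of_nsmul_eq_zero h32
    rcases (Nat.prime_three).eq_one_or_self_of_dvd _ hdvd with h1 | h1
    · exact hg (AddMonoid.addOrderOf_eq_one_iff.mp h1)
    · exact h3 _ h1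
  -- the weight function
  set F : (ZMod 5 × H) ⊕ Fin 2 → ZMod 5 × H := Sum.elim id (fun _ => 0) with hF
  have hsumV : ∑ x : (ZMod 5 × H) ⊕ Fin 2, F x = 0 := by
    rw [Fintype.sum_sum_type]
    have hoddG : Odd (Fintype.card (ZMod 5 × H)) := by
      rw [Fintype.card_prod, ZMod.card]
      exact (by decide : Odd 5).mul hodd
    simp only [hF, Sum.elim_inl, Sum.elim_inr, id_eq]
    rw [aux_sum_univ_zero hoddG]
    simp
  -- the function assigning to each point its triple
  choose t ht using hu
  have htC : ∀ x : (ZMod 5 × H) ⊕ Fin 2, t x ∈ C := fun x => (ht x).1.1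
  have hxt : ∀ x : (ZMod 5 × H) ⊕ Fin 2, x ∈ t x := fun x => (ht x).1.2
  have huniq : ∀ (x : (ZMod 5 × H) ⊕ Fin 2) (T : Set ((ZMod 5 × H) ⊕ Fin 2)),
      T ∈ C → x ∈ T → T = t x := fun x T h1 h2 => (ht x).2 T ⟨h1, h2⟩
  set 𝒯 : Finset (Set ((ZMod 5 × H) ⊕ Fin 2)) := Finset.univ.image t with h𝒯
  set σ : Set ((ZMod 5 × H) ⊕ Fin 2) → ZMod 5 × H :=
    fun T => ∑ x ∈ Finset.univ.filter (fun x => t x = T), F x with hσ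
  have h𝒯C : ∀ T ∈ 𝒯, T ∈ C := by
    intro T hT
    obtain ⟨x, -, rfl⟩ := Finset.mem_image.mp hT
    exact htC x
  have hmaster : ∑ T ∈ 𝒯, σ T = 0 := by
    rw [hσ, h𝒯]
    rw [Finset.sum_fiberwise_of_maps_to
      (fun x _ => Finset.mem_image_of_mem t (Finset.mem_univ x)) F]
    exact hsumV
  -- computing σ on explicit triples
  have hfib : ∀ T ∈ C, ∀ a b c : (ZMod 5 × H) ⊕ Fin 2, a ≠ b → a ≠ c → b ≠ c →
      T = {a, b, c} → σ T = F a + F b + F c := by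
    intro T hT a b c hab hac hbc hTeq
    have hfil : Finset.univ.filter (fun x => t x = T) = ({a, b, c} : Finset _) := by
      ext x
      simp only [Finset.mem_filter, Finset.mem_univ, true_and, Finset.mem_insert,
        Finset.mem_singleton]
      constructor
      · intro h
        have hx : x ∈ T := by rw [← h]; exact hxt x
        rw [hTeq] at hx
        simpa using hx
      · intro h
        have hxT : x ∈ T := by rw [hTeq]; simpa using h
        exact (huniq x T hT hxT).symm
    rw [hσ]
    simp only
    rw [hfil, aux_sum_triple F hab hac hbc]
  -- σ on the three families
  have hB0σ : ∀ T ∈ C, ∀ g g' g'' : ZMod 5 × H, g ≠ g' → g ≠ g'' → g' ≠ g'' →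
      g + g' + g'' = 0 →
      T = {Sum.inl g, Sum.inl g', Sum.inl g''} → σ T = 0 := by
    intro T hT g g' g'' h1 h2 h3' hsum hTeq
    rw [hfib T hT _ _ _ (fun h => h1 (Sum.inl.inj h)) (fun h => h2 (Sum.inl.inj h))
      (fun h => h3' (Sum.inl.inj h)) hTeq]
    simpa [hF] using hsum
  have hBinfσ : ∀ T ∈ C, ∀ g : ZMod 5 × H, g.2 ≠ 0 →
      T = {Sum.inl (-g), Sum.inl ((2 : ℤ) • g), Sum.inr (γ g)} → σ T = g := by
    intro T hT g hg hTeq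
    rw [hfib T hT _ _ _ (fun h => hne3 g hg (Sum.inl.inj h)) (by simp) (by simp) hTeq]
    simp only [hF, Sum.elim_inl, Sum.elim_inr, id_eq]
    rw [two_zsmul]
    abel
  have hWF : ∀ x ∈ W, (F x).2 = 0 := by
    rintro x (⟨g, hg, rfl⟩ | ⟨i, rfl⟩)
    · simpa [hF] using hg
    · simp [hF]
  have hBstarσ : ∀ T ∈ C, T ∈ Bstar → (σ T).2 = 0 := by
    intro T hT hTs
    obtain ⟨a, b, c, hab, hac, hbc, hTeq⟩ := Set.ncard_eq_three.mp (hBcard T hTs)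
    rw [hfib T hT a b c hab hac hbc hTeq]
    have hsub := hBsub T hTs
    rw [hTeq] at hsub
    rw [Prod.snd_add, Prod.snd_add, hWF a (hsub (by simp)), hWF b (hsub (by simp)),
      hWF c (hsub (by simp))]
    simp
  -- cardinality of W
  have hWfin : W.Finite := Set.toFinite W
  have hWcard : W.ncard = 7 := by
    have h5 : ({g : ZMod 5 × H | g.2 = 0}).ncard = 5 := by
      have heq : {g : ZMod 5 × H | g.2 = 0} =
          (fun a : ZMod 5 => ((a, 0) : ZMod 5 × H)) '' Set.univ := by
        ext ⟨a, h⟩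
        simp only [Set.mem_setOf_eq, Set.image_univ, Set.mem_range, Prod.mk.injEq]
        constructor
        · intro h0; exact ⟨a, rfl, h0.symm⟩
        · rintro ⟨a', rfl, rfl⟩; rfl
      rw [heq, Set.ncard_image_of_injective _ (fun a b h => congrArg Prod.fst h),
        Set.ncard_univ, Nat.card_eq_fintype_card, ZMod.card]
    have hdisj : Disjoint (Sum.inl '' {g : ZMod 5 × H | g.2 = 0})
        (Set.range (Sum.inr : Fin 2 → (ZMod 5 × H) ⊕ Fin 2)) := by
      rw [Set.disjoint_left]
      rintro x ⟨g, -, rfl⟩ ⟨i, h⟩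
      cases h
    rw [hWdef, Set.ncard_union_eq hdisj (Set.toFinite _) (Set.toFinite _),
      Set.ncard_image_of_injective _ Sum.inl_injective, h5,
      ← Set.image_univ, Set.ncard_image_of_injective _ Sum.inr_injective,
      Set.ncard_univ, Nat.card_eq_fintype_card, Fintype.card_fin]
  have hfano : ∀ T₁ ∈ Bstar, ∀ T₂ ∈ Bstar, Disjoint T₁ T₂ → False :=
    fun T₁ h1 T₂ h2 hd => aux_fano W hWfin hWcard Bstar hBsub hBcard hBpairs h1 h2 hd
  -- the two triples through the infinity points
  set T₁ : Set ((ZMod 5 × H) ⊕ Fin 2) := t (Sum.inr 0) with hT₁def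
  set T₂ : Set ((ZMod 5 × H) ⊕ Fin 2) := t (Sum.inr 1) with hT₂def
  have hT₁C : T₁ ∈ C := htC _
  have hT₂C : T₂ ∈ C := htC _
  have hT₁𝒯 : T₁ ∈ 𝒯 := Finset.mem_image_of_mem t (Finset.mem_univ _)
  have hT₂𝒯 : T₂ ∈ 𝒯 := Finset.mem_image_of_mem t (Finset.mem_univ _)
  have hi0 : (Sum.inr 0 : (ZMod 5 × H) ⊕ Fin 2) ∈ T₁ := hxt _
  have hi1 : (Sum.inr 1 : (ZMod 5 × H) ⊕ Fin 2) ∈ T₂ := hxt _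
  -- any B∞ triple of C is T₁ or T₂
  have hBinfT : ∀ T ∈ C, ∀ g : ZMod 5 × H, g.2 ≠ 0 →
      T = {Sum.inl (-g), Sum.inl ((2 : ℤ) • g), Sum.inr (γ g)} → T = T₁ ∨ T = T₂ := by
    intro T hT g hg hTeq
    have hmem : Sum.inr (γ g) ∈ T := by rw [hTeq]; simp
    have h' := huniq (Sum.inr (γ g)) T hT hmem
    rcases aux_fin2 (γ g) with h | h
    · left; rw [h'] ; rw [h]
    · right; rw [h']; rw [h]
  -- second components of the master equation
  have hmaster2 : ∑ T ∈ 𝒯, (σ T).2 = 0 := by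
    rw [← Prod.snd_sum, hmaster]
    rfl
  -- case analysis on the triples containing the infinity points
  by_cases hP1 : ∃ g : ZMod 5 × H, g.2 ≠ 0 ∧
      T₁ = {Sum.inl (-g), Sum.inl ((2 : ℤ) • g), Sum.inr (γ g)}
  · obtain ⟨g₁, hg₁, hT₁eq⟩ := hP1
    have hγ₁0 : γ g₁ = 0 := by
      have h' := hi0
      rw [hT₁eq] at h'
      simp only [Set.mem_insert_iff, Set.mem_singleton_iff] at h'
      rcases h' with h' | h' | h'
      · exact absurd h' (by simp)
      · exact absurd h' (by simp)
      · exact (Sum.inr.inj h').symm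
    by_cases hP2 : ∃ g : ZMod 5 × H, g.2 ≠ 0 ∧
        T₂ = {Sum.inl (-g), Sum.inl ((2 : ℤ) • g), Sum.inr (γ g)}
    · -- Case A : both infinity triples come from B∞
      obtain ⟨g₂, hg₂, hT₂eq⟩ := hP2
      have hγ₂1 : γ g₂ = 1 := by
        have h' := hi1
        rw [hT₂eq] at h'
        simp only [Set.mem_insert_iff, Set.mem_singleton_iff] at h'
        rcases h' with h' | h' | h'
        · exact absurd h' (by simp)
        · exact absurd h' (by simp)
        · exact (Sum.inr.inj h').symm
      have hT12 : T₁ ≠ T₂ := by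
        intro h
        rw [← h, hT₁eq] at hi1
        simp only [Set.mem_insert_iff, Set.mem_singleton_iff] at hi1
        rcases hi1 with h' | h' | h'
        · exact absurd h' (by simp)
        · exact absurd h' (by simp)
        · rw [hγ₁0] at h'; exact absurd (Sum.inr.inj h') (by decide)
      have hzero : ∀ T ∈ 𝒯, T ∉ ({T₁, T₂} : Finset (Set ((ZMod 5 × H) ⊕ Fin 2))) →
          (σ T).2 = 0 := by
        intro T hT hTn
        simp only [Finset.mem_insert, Finset.mem_singleton] at hTn
        push_neg at hTn
        have hTC := h𝒯C T hT
        rcases hCB hTC with (hB | hB) | hB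
        · obtain ⟨g, g', g'', h1, h2, h3', hsum, -, hTeq⟩ := hB
          rw [hB0σ T hTC g g' g'' h1 h2 h3' hsum hTeq]
          rfl
        · obtain ⟨g, hg, hTeq⟩ := hB
          rcases hBinfT T hTC g hg hTeq with h | h
          · exact absurd h hTn.1
          · exact absurd h hTn.2
        · exact hBstarσ T hTC hB
      have hsub12 : ({T₁, T₂} : Finset (Set ((ZMod 5 × H) ⊕ Fin 2))) ⊆ 𝒯 := by
        intro T hT
        simp only [Finset.mem_insert, Finset.mem_singleton] at hT
        rcases hT with rfl | rfl
        exacts [hT₁𝒯, hT₂𝒯]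
      have heq2 : g₁.2 + g₂.2 = 0 := by
        have := Finset.sum_subset hsub12 (fun T hT hTn => hzero T hT hTn)
        rw [hmaster2, Finset.sum_pair hT12] at this
        rw [hBinfσ T₁ hT₁C g₁ hg₁ hT₁eq, hBinfσ T₂ hT₂C g₂ hg₂ hT₂eq] at this
        exact this
      have := hγ2 g₁ g₂ hg₁ hg₂ (by rw [Prod.snd_add]; exact heq2)
      rw [hγ₁0, hγ₂1] at this
      exact absurd this (by decide)
    · -- Case B : T₁ from B∞, T₂ not
      have hzero : ∀ T ∈ 𝒯, T ≠ T₁ → (σ T).2 = 0 := by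
        intro T hT hTn
        have hTC := h𝒯C T hT
        rcases hCB hTC with (hB | hB) | hB
        · obtain ⟨g, g', g'', h1, h2, h3', hsum, -, hTeq⟩ := hB
          rw [hB0σ T hTC g g' g'' h1 h2 h3' hsum hTeq]
          rfl
        · obtain ⟨g, hg, hTeq⟩ := hB
          rcases hBinfT T hTC g hg hTeq with h | h
          · exact absurd h hTn
          · exact absurd ⟨g, hg, h ▸ hTeq⟩ hP2
        · exact hBstarσ T hTC hB
      have : (σ T₁).2 = 0 := by
        rw [← hmaster2]
        exact (Finset.sum_eq_single_of_mem T₁ hT₁𝒯 hzero).symm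
      rw [hBinfσ T₁ hT₁C g₁ hg₁ hT₁eq] at this
      exact hg₁ this
  · by_cases hP2 : ∃ g : ZMod 5 × H, g.2 ≠ 0 ∧
        T₂ = {Sum.inl (-g), Sum.inl ((2 : ℤ) • g), Sum.inr (γ g)}
    · -- Case B' : T₂ from B∞, T₁ not
      obtain ⟨g₂, hg₂, hT₂eq⟩ := hP2
      have hzero : ∀ T ∈ 𝒯, T ≠ T₂ → (σ T).2 = 0 := by
        intro T hT hTn
        have hTC := h𝒯C T hT
        rcases hCB hTC with (hB | hB) | hB
        · obtain ⟨g, g', g'', h1, h2, h3', hsum, -, hTeq⟩ := hB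
          rw [hB0σ T hTC g g' g'' h1 h2 h3' hsum hTeq]
          rfl
        · obtain ⟨g, hg, hTeq⟩ := hB
          rcases hBinfT T hTC g hg hTeq with h | h
          · exact absurd ⟨g, hg, h ▸ hTeq⟩ hP1
          · exact absurd h hTn
        · exact hBstarσ T hTC hB
      have : (σ T₂).2 = 0 := by
        rw [← hmaster2]
        exact (Finset.sum_eq_single_of_mem T₂ hT₂𝒯 hzero).symm
      rw [hBinfσ T₂ hT₂C g₂ hg₂ hT₂eq] at this
      exact hg₂ this
    · -- Case C : both infinity triples come from B*
      have hT₁star : T₁ ∈ Bstar := by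
        rcases hCB hT₁C with (hB | hB) | hB
        · obtain ⟨g, g', g'', -, -, -, -, -, hTeq⟩ := hB
          rw [hTeq] at hi0
          simp at hi0
        · exact absurd hB hP1
        · exact hB
      have hT₂star : T₂ ∈ Bstar := by
        rcases hCB hT₂C with (hB | hB) | hB
        · obtain ⟨g, g', g'', -, -, -, -, -, hTeq⟩ := hB
          rw [hTeq] at hi1
          simp at hi1
        · exact absurd hB hP2
        · exact hB
      -- T₁ = T₂
      have hT12 : T₁ = T₂ := by
        by_contra hne
        have hdisj : Disjoint T₁ T₂ := by
          rw [Set.disjoint_left]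
          intro x hx1 hx2
          exact hne ((huniq x T₁ hT₁C hx1).trans (huniq x T₂ hT₂C hx2).symm)
        exact hfano T₁ hT₁star T₂ hT₂star hdisj
      have hi1' : (Sum.inr 1 : (ZMod 5 × H) ⊕ Fin 2) ∈ T₁ := hT12 ▸ hi1
      obtain ⟨z, hz0, hz1, hzT, hT₁eq⟩ :=
        aux_third_point (hWfin.subset (hBsub T₁ hT₁star)) (hBcard T₁ hT₁star)
          hi0 hi1' (by simp)
      have hzW : z ∈ W := hBsub T₁ hT₁star hzT
      obtain ⟨x, hx2, rfl⟩ : ∃ x : ZMod 5 × H, x.2 = 0 ∧ Sum.inl x = z := by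
        rcases hzW with ⟨g, hg, h⟩ | ⟨i, h⟩
        · exact ⟨g, hg, h⟩
        · rcases aux_fin2 i with rfl | rfl
          · exact absurd h.symm hz0
          · exact absurd h.symm hz1
      -- all other triples have σ = 0
      have hzero : ∀ T ∈ 𝒯, T ≠ T₁ → σ T = 0 := by
        intro T hT hTn
        have hTC := h𝒯C T hT
        rcases hCB hTC with (hB | hB) | hB
        · obtain ⟨g, g', g'', h1, h2, h3', hsum, -, hTeq⟩ := hB
          exact hB0σ T hTC g g' g'' h1 h2 h3' hsum hTeq
        · obtain ⟨g, hg, hTeq⟩ := hB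
          rcases hBinfT T hTC g hg hTeq with h | h
          · exact absurd h hTn
          · exact absurd ⟨g, hg, (h.trans hT12.symm) ▸ hTeq⟩ hP1
        · exfalso
          have hdisj : Disjoint T T₁ := by
            rw [Set.disjoint_left]
            intro x hx1 hx2
            exact hTn ((huniq x T hTC hx1).trans (huniq x T₁ hT₁C hx2).symm)
          exact hfano T hB T₁ hT₁star hdisj
      have hσT₁ : σ T₁ = x := by
        rw [hfib T₁ hT₁C _ _ _ (by simp) (by simp) (by simp) hT₁eq]
        simp [hF]
      have hx0 : x = 0 := by
        have := Finset.sum_eq_single_of_mem T₁ hT₁𝒯 hzero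
        rw [hmaster, hσT₁] at this
        exact this.symm
      apply h0
      have : ({Sum.inl 0, Sum.inr 0, Sum.inr 1} :
          Set ((ZMod 5 × H) ⊕ Fin 2)) = T₁ := by
        rw [hT₁eq, hx0]
        ext y
        simp only [Set.mem_insert_iff, Set.mem_singleton_iff]
        tauto
      rw [this]
      exact hT₁star
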